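/- Let L_CE: ℝ → ℝ be defined by L_CE(b) = log(1 + e^{−(1/4 + b)}) + log(1 + e^{−b}) + log(1 + e^{−(1/4 − b)}). Then the derivative of L_CE is strictly negative at every b ≤ 1/4; consequently, every global minimizer b* of L_CE satisfies b* > 1/4. In particular, since the threshold model f(x) = x − b classifies all three toy points correctly only when 0 < b < 1/4, the cross-entropy minimizer misclassifies at least one point. -/

import Mathlib

/-- The toy-example cross-entropy loss. -/
noncomputable def toyCE (b : ℝ) : ℝ :=
  Real.log (1 + Real.exp (-(1 / 4 + b))) + Real.log (1 + Real.exp (-b)) +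
    Real.log (1 + Real.exp (-(1 / 4 - b)))

lemma toyCE_hasDerivAt (b : ℝ) :
    HasDerivAt toyCE
      (-Real.exp (-(1 / 4 + b)) / (1 + Real.exp (-(1 / 4 + b))) +
        -Real.exp (-b) / (1 + Real.exp (-b)) +
        Real.exp (-(1 / 4 - b)) / (1 + Real.exp (-(1 / 4 - b)))) b := by
  have h1 : HasDerivAt (fun b : ℝ => Real.log (1 + Real.exp (-(1 / 4 + b))))
      (-Real.exp (-(1 / 4 + b)) / (1 + Real.exp (-(1 / 4 + b)))) b := by
    have hi : HasDerivAt (fun b : ℝ => -(1 / 4 + b)) (-1) b := by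
      exact ((hasDerivAt_id' b).const_add (1 / 4 : ℝ)).neg
    have he := hi.exp
    have hc : HasDerivAt (fun b : ℝ => 1 + Real.exp (-(1 / 4 + b)))
        (Real.exp (-(1 / 4 + b)) * (-1)) b := he.const_add 1
    have hne : (1 : ℝ) + Real.exp (-(1 / 4 + b)) ≠ 0 := by
      positivity
    have := hc.log hne
    convert this using 1
    ring
  have h2 : HasDerivAt (fun b : ℝ => Real.log (1 + Real.exp (-b)))
      (-Real.exp (-b) / (1 + Real.exp (-b))) b := by
    have hi : HasDerivAt (fun b : ℝ => -b) (-1) b := (hasDerivAt_id b).neg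
    have he := hi.exp
    have hc : HasDerivAt (fun b : ℝ => 1 + Real.exp (-b))
        (Real.exp (-b) * (-1)) b := he.const_add 1
    have hne : (1 : ℝ) + Real.exp (-b) ≠ 0 := by positivity
    have := hc.log hne
    convert this using 1
    ring
  have h3 : HasDerivAt (fun b : ℝ => Real.log (1 + Real.exp (-(1 / 4 - b))))
      (Real.exp (-(1 / 4 - b)) / (1 + Real.exp (-(1 / 4 - b)))) b := by
    have hi : HasDerivAt (fun b : ℝ => -(1 / 4 - b)) 1 b := by
      have := ((hasDerivAt_id' b).neg.const_add (1 / 4 : ℝ)).neg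
      rw [neg_neg] at this
      exact this
    have he := hi.exp
    have hc : HasDerivAt (fun b : ℝ => 1 + Real.exp (-(1 / 4 - b)))
        (Real.exp (-(1 / 4 - b)) * 1) b := he.const_add 1
    have hne : (1 : ℝ) + Real.exp (-(1 / 4 - b)) ≠ 0 := by positivity
    have := hc.log hne
    convert this using 1
    ring
  exact (h1.add h2).add h3

lemma exp_half_lt_two : Real.exp (1 / 2) < 2 := by
  have h : Real.exp (1 / 2) * Real.exp (1 / 2) = Real.exp 1 := by
    rw [← Real.exp_add]; norm_num
  have h1 := Real.exp_one_lt_d9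
  nlinarith [Real.exp_pos (1 / 2 : ℝ)]

lemma toyCE_deriv_neg (b : ℝ) (hb : b ≤ 1 / 4) : deriv toyCE b < 0 := by
  rw [(toyCE_hasDerivAt b).deriv]
  set t1 := Real.exp (-(1 / 4 + b)) with ht1
  set t2 := Real.exp (-b) with ht2
  set t3 := Real.exp (-(1 / 4 - b)) with ht3
  have hp1 : 0 < t1 := Real.exp_pos _
  have hp2 : 0 < t2 := Real.exp_pos _
  have hp3 : 0 < t3 := Real.exp_pos _
  have h3le : t3 ≤ 1 := by
    rw [ht3]
    apply Real.exp_le_one_iff.mpr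
    linarith
  have hhalf : (1 : ℝ) / 2 < Real.exp (-(1 / 2 : ℝ)) := by
    have := exp_half_lt_two
    rw [Real.exp_neg]
    have h2 : 0 < Real.exp (1 / 2 : ℝ) := Real.exp_pos _
    rw [lt_inv_comm₀ (by norm_num) h2]
    linarith
  have h1ge : 1 / 2 < t1 := by
    have : Real.exp (-(1 / 2 : ℝ)) ≤ t1 := by
      rw [ht1]; apply Real.exp_le_exp.mpr; linarith
    linarith
  have h2ge : 1 / 2 < t2 := by
    have : Real.exp (-(1 / 2 : ℝ)) ≤ t2 := by
      rw [ht2]; apply Real.exp_le_exp.mpr; linarith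
    linarith
  have b1 : (1 : ℝ) / 3 < t1 / (1 + t1) := by
    rw [lt_div_iff₀ (by linarith)]; linarith
  have b2 : (1 : ℝ) / 3 < t2 / (1 + t2) := by
    rw [lt_div_iff₀ (by linarith)]; linarith
  have b3 : t3 / (1 + t3) ≤ 1 / 2 := by
    rw [div_le_iff₀ (by linarith)]; linarith
  have e1 : -t1 / (1 + t1) = -(t1 / (1 + t1)) := by ring
  have e2 : -t2 / (1 + t2) = -(t2 / (1 + t2)) := by ring
  rw [e1, e2]
  linarith

/-- The derivative of the toy cross-entropy loss is strictly negative at every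
`b ≤ 1/4`; consequently every global minimizer satisfies `b > 1/4` and in
particular lies outside the interval `(0, 1/4)` of perfect-classification
thresholds, so the cross-entropy minimizer misclassifies at least one point. -/
theorem toyCE_minimizer_gt_quarter :
    (∀ b : ℝ, b ≤ 1 / 4 → deriv toyCE b < 0) ∧
    (∀ b : ℝ, (∀ x : ℝ, toyCE b ≤ toyCE x) → 1 / 4 < b) ∧
    (∀ b : ℝ, (∀ x : ℝ, toyCE b ≤ toyCE x) → ¬(0 < b ∧ b < 1 / 4)) := by
  have key : ∀ b : ℝ, (∀ x : ℝ, toyCE b ≤ toyCE x) → 1 / 4 < b := by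
    intro b hmin
    by_contra h
    push_neg at h
    have hlt := toyCE_deriv_neg b h
    have hloc : IsLocalMin toyCE b := Filter.Eventually.of_forall hmin
    have hz : deriv toyCE b = 0 := hloc.deriv_eq_zero
    rw [hz] at hlt
    exact lt_irrefl 0 hlt
  exact ⟨toyCE_deriv_neg, key, fun b hmin ⟨_, h2⟩ => absurd (key b hmin) (not_lt.mpr h2.le)⟩
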